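/- Let K/ℚ be a quadratic extension with nontrivial automorphism τ, let c ∈ ℚ, and let α ∈ K be a point of exact period 3 for f_c(z) = z^2 + c. Suppose the 3-cycle of α, {α, f_c(α), f_c^2(α)}, is the set of all K-rational points of exact period 3 for f_c. Then α ∈ ℚ. -/

import Mathlib

lemma fixed_is_rational
    (K : Type*) [Field K] [Algebra ℚ K] (hdim : Module.finrank ℚ K = 2)
    (τ : K ≃ₐ[ℚ] K) (hτ : τ ≠ AlgEquiv.refl) (α : K) (hfix : τ α = α) :
    ∃ q : ℚ, algebraMap ℚ K q = α := by
  by_contra h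
  push_neg at h
  have hinj : Function.Injective (algebraMap ℚ K) := (algebraMap ℚ K).injective
  have : CharZero K := charZero_of_injective_algebraMap hinj
  have hli : LinearIndependent ℚ ![(1 : K), α] := by
    rw [LinearIndependent.pair_iff]
    intro s t hst
    rw [Algebra.smul_def, Algebra.smul_def, mul_one, eq_ratCast, eq_ratCast] at hst
    rcases eq_or_ne t 0 with ht | ht
    · subst ht
      simp only [Rat.cast_zero, zero_mul, add_zero] at hst
      exact ⟨by exact_mod_cast hst, rfl⟩
    · exfalso
      apply h (-s / t)
      have htK : (t : K) ≠ 0 := by exact_mod_cast ht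
      rw [eq_ratCast]
      push_cast
      field_simp
      linear_combination -hst
  have hspan := hli.span_eq_top_of_card_eq_finrank (by simp [hdim])
  apply hτ
  ext x
  have hx : x ∈ Submodule.span ℚ ({(1:K), α} : Set K) := by
    have hr : Set.range ![(1:K), α] = {(1:K), α} := by
      simp [Matrix.range_cons, Matrix.range_empty, Set.pair_comm]
    rw [← hr, hspan]; trivial
  rw [Submodule.mem_span_pair] at hx
  obtain ⟨s, t, rfl⟩ := hx
  rw [Algebra.smul_def, Algebra.smul_def, mul_one]
  simp only [map_add, map_mul, AlgEquiv.commutes, hfix, AlgEquiv.coe_refl, id_eq]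

lemma tau_sq_fix
    (K : Type*) [Field K] [Algebra ℚ K] (hdim : Module.finrank ℚ K = 2)
    (τ : K ≃ₐ[ℚ] K) (α : K) : τ (τ α) = α := by
  have hfd : FiniteDimensional ℚ K := FiniteDimensional.of_finrank_pos (by omega)
  have : CharZero K := charZero_of_injective_algebraMap (algebraMap ℚ K).injective
  have hnli : ¬ LinearIndependent ℚ ![(1 : K), α, α ^ 2] := by
    intro hli
    have := hli.fintype_card_le_finrank
    simp [hdim] at this
  rw [Fintype.not_linearIndependent_iff] at hnli
  obtain ⟨g, hg, i, hi⟩ := hnli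
  rw [Fin.sum_univ_three] at hg
  simp only [Matrix.cons_val_zero, Matrix.cons_val_one, Matrix.head_cons,
    Matrix.cons_val_two, Matrix.tail_cons] at hg
  rw [Algebra.smul_def, Algebra.smul_def, Algebra.smul_def, mul_one,
    eq_ratCast, eq_ratCast, eq_ratCast] at hg
  -- hg : ↑(g 0) + ↑(g 1) * α + ↑(g 2) * α^2 = 0
  rcases eq_or_ne (g 2) 0 with h2 | h2
  · rcases eq_or_ne (g 1) 0 with h1 | h1
    · exfalso
      rw [h1, h2] at hg
      simp only [Rat.cast_zero, zero_mul, add_zero] at hg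
      have hg0 : g 0 = 0 := by exact_mod_cast hg
      fin_cases i <;> simp_all
    · -- α rational, hence fixed by τ
      have hα : algebraMap ℚ K (-(g 0) / g 1) = α := by
        rw [h2] at hg
        simp only [Rat.cast_zero, zero_mul, add_zero] at hg
        have h1K : ((g 1 : ℚ) : K) ≠ 0 := by exact_mod_cast h1
        rw [eq_ratCast]
        push_cast
        field_simp
        linear_combination -hg
      rw [← hα, AlgEquiv.commutes, AlgEquiv.commutes]
  · -- quadratic relation α^2 = a*α + b
    set a : K := algebraMap ℚ K (-(g 1) / g 2) with ha
    set b : K := algebraMap ℚ K (-(g 0) / g 2) with hb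
    have h2K : ((g 2 : ℚ) : K) ≠ 0 := by exact_mod_cast h2
    have hquad : α ^ 2 = a * α + b := by
      rw [ha, hb, eq_ratCast, eq_ratCast]
      push_cast
      rw [div_mul_eq_mul_div, ← add_div, eq_div_iff h2K]
      linear_combination hg
    have hquad' : (τ α) ^ 2 = a * (τ α) + b := by
      have := congrArg τ hquad
      simpa [ha, hb, map_add, map_mul, map_pow, AlgEquiv.commutes] using this
    have hfact : (τ α - α) * (τ α + α - a) = 0 := by
      linear_combination hquad' - hquad
    rcases mul_eq_zero.mp hfact with hc | hc
    · have hte : τ α = α := by linear_combination hc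
      rw [hte, hte]
    · have hτα : τ α = a - α := by linear_combination hc
      have hstep : τ (τ α) = a - τ α := by
        have := congrArg τ hτα
        rw [map_sub, ha, AlgEquiv.commutes] at this
        rw [this]
      rw [hstep, hτα]
      ring

/-- Let `K/ℚ` be quadratic with nontrivial automorphism `τ`, `c ∈ ℚ`, and `α ∈ K` of
exact period 3 for `f_c(z) = z^2 + c`. If the 3-cycle of `α` consists of all `K`-rational
points of exact period 3, then `α ∈ ℚ`. -/
theorem period_three_point_is_rational
    (K : Type*) [Field K] [Algebra ℚ K] (hdim : Module.finrank ℚ K = 2)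
    (τ : K ≃ₐ[ℚ] K) (hτ : τ ≠ AlgEquiv.refl)
    (c : ℚ) (α : K)
    (f : K → K) (hf : f = fun z => z ^ 2 + algebraMap ℚ K c)
    (hper : f^[3] α = α) (h1 : f α ≠ α) (h2 : f^[2] α ≠ α)
    (hall : ∀ β : K, f^[3] β = β → f β ≠ β → f^[2] β ≠ β →
      β ∈ ({α, f α, f^[2] α} : Set K)) :
    ∃ q : ℚ, algebraMap ℚ K q = α := by
  have hcomm : ∀ z : K, τ (f z) = f (τ z) := by
    intro z
    simp [hf, map_add, map_pow, AlgEquiv.commutes]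
  have hcomm2 : ∀ z : K, τ (f^[2] z) = f^[2] (τ z) := by
    intro z
    simp only [Function.iterate_succ, Function.iterate_zero, Function.comp_apply, id_eq]
    rw [hcomm, hcomm]
  have hcomm3 : ∀ z : K, τ (f^[3] z) = f^[3] (τ z) := by
    intro z
    simp only [Function.iterate_succ, Function.iterate_zero, Function.comp_apply, id_eq]
    rw [hcomm, hcomm, hcomm]
  have hsq := tau_sq_fix K hdim τ α
  have hper' : f^[3] (τ α) = τ α := by rw [← hcomm3, hper]
  have h1' : f (τ α) ≠ τ α := by
    rw [← hcomm]; exact fun hh => h1 (τ.injective hh)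
  have h2' : f^[2] (τ α) ≠ τ α := by
    rw [← hcomm2]; exact fun hh => h2 (τ.injective hh)
  have hmem := hall (τ α) hper' h1' h2'
  simp only [Set.mem_insert_iff, Set.mem_singleton_iff] at hmem
  have e21 : f^[2] α = f (f α) := by
    simp [Function.iterate_succ_apply]
  rcases hmem with hcase | hcase | hcase
  · exact fixed_is_rational K hdim τ hτ α hcase
  · exfalso
    apply h2
    rw [e21]
    calc f (f α) = f (τ α) := by rw [hcase]
    _ = τ (f α) := (hcomm _).symm
    _ = τ (τ α) := by rw [hcase]
    _ = α := hsq
  · exfalso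
    apply h1
    have hit3 : f (f (f α)) = α := hper
    have h4 : f^[2] (f^[2] α) = f α := congrArg f hit3
    calc f α = f^[2] (f^[2] α) := h4.symm
    _ = f^[2] (τ α) := by rw [hcase]
    _ = τ (f^[2] α) := (hcomm2 _).symm
    _ = τ (τ α) := by rw [hcase]
    _ = α := hsq
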